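/- Let $\bar{T}$ be a symmetric, trace-free, divergence-free 2-tensor on $\mathbb{R}^3$ (with respect to the Euclidean metric $\delta$) lying in a weighted Sobolev space $H^{k-2,\beta-2}$ with $\beta \in (-1,0)$, $k \geq 4$. If $\varepsilon^{eb}{}_a \partial_b \bar{T}_{ce} = 0$ (i.e. for each fixed $c$, the vector-valued 1-form $\bar{T}_{cb}\, dx^b$ is closed), then $\bar{T} = 0$. -/

import Mathlib

noncomputable section
open scoped BigOperators
open MeasureTheory Real

/-- Points of `ℝ³`. -/
abbrev Pt := Fin 3 → ℝ

/-- Partial derivative of a (possibly vector-valued) function in the `i`-th coordinate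
direction. -/
def pder {F : Type*} [NormedAddCommGroup F] [NormedSpace ℝ F]
    (i : Fin 3) (f : Pt → F) (x : Pt) : F :=
  fderiv ℝ f x (Pi.single i 1)

/-- The alternating (permutation) symbol on three indices. -/
def epsSym (a b c : Fin 3) : ℝ :=
  (((b : ℕ) : ℝ) - ((a : ℕ) : ℝ)) * (((c : ℕ) : ℝ) - ((b : ℕ) : ℝ)) *
    (((c : ℕ) : ℝ) - ((a : ℕ) : ℝ)) / 2

/-- Kronecker delta. -/
def kd (a b : Fin 3) : ℝ := if a = b then 1 else 0

/-- Symmetry of a 2-tensor. -/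
def sym2 (T : Fin 3 → Fin 3 → ℝ) : Prop := ∀ a b, T a b = T b a

/-- Bartnik's weight function `σ(x) = (1 + |x|²)^{1/2}`. -/
def wWeight (x : Pt) : ℝ := Real.sqrt (1 + ‖x‖ ^ 2)

/-- Membership in the weighted Sobolev space `H^{k,β}` (Bartnik's convention). -/
def Hmem {F : Type*} [NormedAddCommGroup F] [NormedSpace ℝ F]
    (k : ℕ) (β : ℝ) (f : Pt → F) : Prop :=
  ContDiff ℝ k f ∧ ∀ l ≤ k,
    Integrable fun x => ‖iteratedFDeriv ℝ l f x‖ ^ 2 * wWeight x ^ (-2 * (β - (l : ℝ)) - 3)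

/-- The weighted Sobolev norm `‖·‖_{H^{k,β}}` (Bartnik's convention). -/
def wnorm {F : Type*} [NormedAddCommGroup F] [NormedSpace ℝ F]
    (k : ℕ) (β : ℝ) (f : Pt → F) : ℝ :=
  (∑ l ∈ Finset.range (k + 1),
    ∫ x, ‖iteratedFDeriv ℝ l f x‖ ^ 2 * wWeight x ^ (-2 * (β - (l : ℝ)) - 3)) ^ (1/2 : ℝ)

/-- Euclidean Laplacian of a scalar function on `ℝ³`. -/
def lapE (f : Pt → ℝ) (x : Pt) : ℝ := ∑ i, pder i (pder i f) x


open Set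
open scoped ENNReal

section AuxLemmas

lemma contDiff_pder {f : Pt → ℝ} (hf : ContDiff ℝ 2 f) (i : Fin 3) :
    ContDiff ℝ 1 (pder i f) := by
  have h1 : ContDiff ℝ 1 (fderiv ℝ f) := hf.fderiv_right (by norm_num)
  exact (ContinuousLinearMap.apply ℝ ℝ (Pi.single i 1 : Pt)).contDiff.comp h1

lemma pder_mul {f g : Pt → ℝ} {x : Pt} (hf : DifferentiableAt ℝ f x)
    (hg : DifferentiableAt ℝ g x) (i : Fin 3) :
    pder i (fun y => f y * g y) x = f x * pder i g x + g x * pder i f x := by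
  unfold pder
  rw [fderiv_fun_mul hf hg]
  simp [mul_comm]

lemma energy_le (u g : Pt → ℝ)
    (hu : ContDiff ℝ 2 u) (hgc : Continuous g)
    (hdom : ∀ x i, |u x * pder i u x| ≤ g x)
    (hharm : ∀ x, (∑ i, pder i (pder i u) x) = 0) (R : ℝ) (hR : 0 < R) :
    (∫ x in Icc (fun _ : Fin 3 => -R) (fun _ => R), ∑ i, (pder i u x) ^ 2) ≤
      ∑ i : Fin 3,
        ((∫ y in Icc (fun _ : Fin 2 => -R) (fun _ => R), g (i.insertNth R y)) +
          ∫ y in Icc (fun _ : Fin 2 => -R) (fun _ => R), g (i.insertNth (-R) y)) := by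
  have hud : Differentiable ℝ u := hu.differentiable (by norm_num)
  have hpc : ∀ i, ContDiff ℝ 1 (pder i u) := contDiff_pder hu
  set f : Pt → Pt := fun x i => u x * pder i u x with hf
  set f' : Pt → Pt →L[ℝ] Pt := fun x =>
    ContinuousLinearMap.pi (fun i => fderiv ℝ (fun y => u y * pder i u y) x) with hf'
  have hdi : ∀ i, Differentiable ℝ (fun y => u y * pder i u y) := fun i =>
    hud.mul ((hpc i).differentiable one_ne_zero)
  have hfd : ∀ x, HasFDerivAt f (f' x) x := fun x =>
    hasFDerivAt_pi.2 fun i => ((hdi i) x).hasFDerivAt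
  have hfc : Continuous f := by
    apply continuous_pi
    intro i
    exact (hud.continuous).mul ((hpc i).continuous)
  have hdivg : ∀ x, (∑ i, f' x (Pi.single i 1) i) = ∑ i, (pder i u x) ^ 2 := by
    intro x
    have : ∀ i : Fin 3, f' x (Pi.single i 1) i
        = pder i u x * pder i u x + u x * pder i (pder i u) x := by
      intro i
      have : f' x (Pi.single i 1) i = pder i (fun y => u y * pder i u y) x := rfl
      rw [this, pder_mul (hud x) (((hpc i).differentiable one_ne_zero) x) i]
      ring
    rw [Finset.sum_congr rfl fun i _ => this i]
    rw [Finset.sum_add_distrib, ← Finset.mul_sum, hharm x]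
    simp [pow_two]
  set a : Pt := fun _ => -R with ha
  set b : Pt := fun _ => R with hb
  have hab : a ≤ b := fun i => by simp only [a, b]; linarith
  have hins : ∀ (i : Fin 3), Continuous fun p : ℝ × (Fin 2 → ℝ) => (i.insertNth p.1 p.2 : Pt) := by
    intro i
    apply continuous_pi
    intro j
    refine Fin.succAboveCases i ?_ ?_ j
    · simpa using continuous_fst
    · intro l
      simp only [Fin.insertNth_apply_succAbove]; exact (continuous_apply l).comp continuous_snd
  have hgins : ∀ (i : Fin 3) (t : ℝ), Continuous fun y : Fin 2 → ℝ => g (i.insertNth t y) := by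
    intro i t
    exact hgc.comp ((hins i).comp (Continuous.prodMk_right t))
  have Hi : IntegrableOn (fun x => ∑ i : Fin 3, f' x (Pi.single i 1) i) (Icc a b) := by
    have : Continuous fun x => ∑ i : Fin 3, f' x (Pi.single i 1) i := by
      have : (fun x => ∑ i : Fin 3, f' x (Pi.single i 1) i)
          = fun x => ∑ i, (pder i u x) ^ 2 := funext fun x => hdivg x
      rw [this]
      exact continuous_finset_sum _ fun i _ => ((hpc i).continuous).pow 2
    exact this.integrableOn_Icc
  have hDT := integral_divergence_of_hasFDerivAt_off_countable (n := 2) a b hab f f' ∅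
    Set.countable_empty hfc.continuousOn (fun x _ => hfd x) Hi
  have hLHS : (∫ x in Icc a b, ∑ i : Fin 3, f' x (Pi.single i 1) i)
      = ∫ x in Icc a b, ∑ i, (pder i u x) ^ 2 := by
    exact integral_congr_ae (Filter.Eventually.of_forall fun x => hdivg x)
  rw [hLHS] at hDT
  rw [hDT]
  apply Finset.sum_le_sum
  intro i _
  have hface : ∀ t : ℝ, ‖∫ y in Icc (a ∘ i.succAbove) (b ∘ i.succAbove),
      f (i.insertNth t y) i‖ ≤ ∫ y in Icc (a ∘ i.succAbove) (b ∘ i.succAbove),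
        g (i.insertNth t y) := by
    intro t
    apply norm_integral_le_of_norm_le ((hgins i t).integrableOn_Icc)
    refine Filter.Eventually.of_forall fun y => ?_
    exact hdom (i.insertNth t y) i
  have hco : (a ∘ i.succAbove) = (fun _ : Fin 2 => -R) := rfl
  have hco' : (b ∘ i.succAbove) = (fun _ : Fin 2 => R) := rfl
  have h1 := hface (b i)
  have h2 := hface (a i)
  rw [hco, hco'] at h1 h2
  have hai : a i = -R := rfl
  have hbi : b i = R := rfl
  rw [hai] at h2; rw [hbi] at h1
  calc (∫ y in Icc (fun _ : Fin 2 => -R) (fun _ => R), f (i.insertNth R y) i) -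
        ∫ y in Icc (fun _ : Fin 2 => -R) (fun _ => R), f (i.insertNth (-R) y) i
      ≤ ‖∫ y in Icc (fun _ : Fin 2 => -R) (fun _ => R), f (i.insertNth R y) i‖ +
        ‖∫ y in Icc (fun _ : Fin 2 => -R) (fun _ => R), f (i.insertNth (-R) y) i‖ := by
        simp only [Real.norm_eq_abs]
        have h3 := le_abs_self (∫ y in Icc (fun _ : Fin 2 => -R) (fun _ => R), f (i.insertNth R y) i)
        have h4 := neg_abs_le (∫ y in Icc (fun _ : Fin 2 => -R) (fun _ => R), f (i.insertNth (-R) y) i)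
        linarith
    _ ≤ _ := add_le_add h1 h2

lemma grad_eq_zero (u g : Pt → ℝ) (hu : ContDiff ℝ 2 u) (hgc : Continuous g)
    (hgi : Integrable g) (hg0 : ∀ x, 0 ≤ g x)
    (hdom : ∀ x i, |u x * pder i u x| ≤ g x)
    (hharm : ∀ x, (∑ i, pder i (pder i u) x) = 0) :
    ∀ (i : Fin 3) (x : Pt), pder i u x = 0 := by
  by_contra hcon
  push_neg at hcon
  obtain ⟨i₀, x₀, hne⟩ := hcon
  set φ : Pt → ℝ := fun x => ∑ i, (pder i u x) ^ 2 with hφdef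
  have hφc : Continuous φ :=
    continuous_finset_sum _ fun i _ => ((contDiff_pder hu i).continuous).pow 2
  have hφ0 : ∀ x, 0 ≤ φ x := fun x => Finset.sum_nonneg fun i _ => sq_nonneg _
  have hφx₀ : 0 < φ x₀ := by
    have h1 : (pder i₀ u x₀) ^ 2 ≤ φ x₀ :=
      Finset.single_le_sum (fun i _ => sq_nonneg (pder i u x₀)) (Finset.mem_univ i₀)
    have := pow_pos (abs_pos.2 hne) 2
    rw [← sq_abs] at h1
    linarith [sq_abs (pder i₀ u x₀)]
  -- find a small ball where φ is bounded below
  obtain ⟨ε, hε0, hballε⟩ : ∃ ε > 0, ∀ y, dist y x₀ < ε → φ x₀ / 2 < φ y := by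
    have : ∀ᶠ y in nhds x₀, φ x₀ / 2 < φ y :=
      (hφc.continuousAt (x := x₀)).eventually (eventually_gt_nhds (by linarith))
    rcases Metric.eventually_nhds_iff.1 this with ⟨ε, hε0, h⟩
    exact ⟨ε, hε0, fun y hy => h hy⟩
  set δ := ε / 2 with hδdef
  have hδ0 : 0 < δ := by positivity
  have hball : ∀ y ∈ Metric.closedBall x₀ δ, φ x₀ / 2 ≤ φ y := by
    intro y hy
    rw [Metric.mem_closedBall] at hy
    exact (hballε y (lt_of_le_of_lt hy (by linarith))).le
  set m := φ x₀ / 2 * (volume (Metric.closedBall x₀ δ)).toReal with hmdef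
  have hm0 : 0 < m := by
    apply mul_pos (by linarith)
    rw [ENNReal.toReal_pos_iff]
    exact ⟨Metric.measure_closedBall_pos volume x₀ hδ0, measure_closedBall_lt_top⟩
  set R₀ := ‖x₀‖ + δ + 1 with hR₀def
  have hR₀pos : 0 < R₀ := by positivity
  have hmE : ∀ R, R₀ ≤ R →
      m ≤ ∫ x in Icc (fun _ : Fin 3 => -R) (fun _ => R), φ x := by
    intro R hR
    have hsub : Metric.closedBall x₀ δ ⊆ Icc (fun _ : Fin 3 => -R) (fun _ => R) := by
      intro y hy
      rw [Metric.mem_closedBall] at hy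
      have hy' : ‖y‖ ≤ ‖x₀‖ + δ := by
        calc ‖y‖ ≤ ‖x₀‖ + ‖y - x₀‖ := by
              have := norm_sub_norm_le y x₀; linarith [norm_sub_rev y x₀ ▸ this]
          _ ≤ ‖x₀‖ + δ := by rw [← dist_eq_norm] at *; linarith
      constructor <;> intro i <;>
        (have hyi : |y i| ≤ ‖y‖ := by
          have := norm_le_pi_norm y i
          simpa using this)
      · simp only []; nlinarith [abs_le.1 hyi]
      · nlinarith [abs_le.1 hyi]
    have h1 : m ≤ ∫ x in Metric.closedBall x₀ δ, φ x := by
      apply setIntegral_ge_of_const_le_real measurableSet_closedBall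
        measure_closedBall_lt_top.ne hball
      exact hφc.continuousOn.integrableOn_compact (isCompact_closedBall _ _)
    have h2 : (∫ x in Metric.closedBall x₀ δ, φ x) ≤
        ∫ x in Icc (fun _ : Fin 3 => -R) (fun _ => R), φ x := by
      apply setIntegral_mono_set hφc.integrableOn_Icc
        (Filter.Eventually.of_forall fun x => hφ0 x) (HasSubset.Subset.eventuallyLE hsub)
    linarith
  -- lintegral contradiction
  have hgins : ∀ (i : Fin 3) (t : ℝ), Continuous fun y : Fin 2 → ℝ => g (i.insertNth t y) := by
    intro i t
    have hins : Continuous fun p : ℝ × (Fin 2 → ℝ) => (i.insertNth p.1 p.2 : Pt) := by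
      apply continuous_pi
      intro j
      refine Fin.succAboveCases i ?_ ?_ j
      · simpa using continuous_fst
      · intro l
        simp only [Fin.insertNth_apply_succAbove]; exact (continuous_apply l).comp continuous_snd
    exact hgc.comp (hins.comp (Continuous.prodMk_right t))
  set Gr : Pt → ℝ≥0∞ := fun x => ENNReal.ofReal (g x) with hGrdef
  have hGrmeas : Measurable Gr := ENNReal.measurable_ofReal.comp hgc.measurable
  set S := ∫⁻ x, Gr x with hSdef
  have hS : S < ⊤ := by
    have h1 := hgi.hasFiniteIntegral
    rw [hasFiniteIntegral_def] at h1
    refine lt_of_le_of_lt (lintegral_mono fun x => ?_) h1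
    show ENNReal.ofReal (g x) ≤ _
    rw [← Real.enorm_eq_ofReal (hg0 x)]
  set H : Fin 3 → ℝ → ℝ≥0∞ := fun i t => ∫⁻ y : Fin 2 → ℝ, Gr (i.insertNth t y) with hHdef
  have hGmeas : ∀ i : Fin 3, Measurable fun p : ℝ × (Fin 2 → ℝ) => Gr (i.insertNth p.1 p.2) := by
    intro i
    have : (fun p : ℝ × (Fin 2 → ℝ) => Gr (i.insertNth p.1 p.2))
        = Gr ∘ (MeasurableEquiv.piFinSuccAbove (fun _ : Fin 3 => ℝ) i).symm := rfl
    rw [this]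
    exact hGrmeas.comp (MeasurableEquiv.measurable _)
  have hHmeas : ∀ i, Measurable (H i) := fun i => (hGmeas i).lintegral_prod_right'
  have hHtot : ∀ i, (∫⁻ t, H i t) = S := by
    intro i
    have h1 := MeasurePreserving.lintegral_comp
      ((volume_preserving_piFinSuccAbove (fun _ : Fin 3 => ℝ) i).symm) hGrmeas
    have h2 : (∫⁻ p : ℝ × (Fin 2 → ℝ), Gr (i.insertNth p.1 p.2)) = S := h1
    rw [← h2, Measure.volume_eq_prod, lintegral_prod _ ((hGmeas i).aemeasurable)]
  have hQ : ∀ (i : Fin 3) (t R : ℝ),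
      ENNReal.ofReal (∫ y in Icc (fun _ : Fin 2 => -R) (fun _ => R), g (i.insertNth t y))
        ≤ H i t := by
    intro i t R
    rw [ofReal_integral_eq_lintegral_ofReal ((hgins i t).integrableOn_Icc)
      (Filter.Eventually.of_forall fun y => hg0 _)]
    exact lintegral_mono' Measure.restrict_le_self le_rfl
  set F : ℝ → ℝ≥0∞ := fun R => ∑ i : Fin 3, (H i R + H i (-R)) with hFdef
  have hFmeas : Measurable F := by
    apply Finset.measurable_sum
    intro i _
    exact ((hHmeas i).add ((hHmeas i).comp measurable_neg))
  have hpt : ∀ R, R ∈ Ioi R₀ → ENNReal.ofReal m ≤ F R := by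
    intro R hR
    rw [mem_Ioi] at hR
    have hRpos : 0 < R := lt_trans hR₀pos hR
    have h1 := hmE R hR.le
    have h2 := energy_le u g hu hgc hdom hharm R hRpos
    have h3 : m ≤ ∑ i : Fin 3,
        ((∫ y in Icc (fun _ : Fin 2 => -R) (fun _ => R), g (i.insertNth R y)) +
          ∫ y in Icc (fun _ : Fin 2 => -R) (fun _ => R), g (i.insertNth (-R) y)) := le_trans h1 h2
    calc ENNReal.ofReal m ≤ ENNReal.ofReal (∑ i : Fin 3,
        ((∫ y in Icc (fun _ : Fin 2 => -R) (fun _ => R), g (i.insertNth R y)) +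
          ∫ y in Icc (fun _ : Fin 2 => -R) (fun _ => R), g (i.insertNth (-R) y))) :=
        ENNReal.ofReal_le_ofReal h3
      _ = ∑ i : Fin 3, ENNReal.ofReal
          ((∫ y in Icc (fun _ : Fin 2 => -R) (fun _ => R), g (i.insertNth R y)) +
            ∫ y in Icc (fun _ : Fin 2 => -R) (fun _ => R), g (i.insertNth (-R) y)) := by
        apply ENNReal.ofReal_sum_of_nonneg
        intro i _
        have p1 : 0 ≤ ∫ y in Icc (fun _ : Fin 2 => -R) (fun _ => R), g (i.insertNth R y) :=
          setIntegral_nonneg measurableSet_Icc fun y _ => hg0 _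
        have p2 : 0 ≤ ∫ y in Icc (fun _ : Fin 2 => -R) (fun _ => R), g (i.insertNth (-R) y) :=
          setIntegral_nonneg measurableSet_Icc fun y _ => hg0 _
        linarith
      _ ≤ F R := by
        apply Finset.sum_le_sum
        intro i _
        calc ENNReal.ofReal _ ≤
            ENNReal.ofReal (∫ y in Icc (fun _ : Fin 2 => -R) (fun _ => R), g (i.insertNth R y)) +
            ENNReal.ofReal (∫ y in Icc (fun _ : Fin 2 => -R) (fun _ => R), g (i.insertNth (-R) y)) :=
            ENNReal.ofReal_add_le
          _ ≤ H i R + H i (-R) := add_le_add (hQ i R R) (hQ i (-R) R)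
  have hlow : (⊤ : ℝ≥0∞) ≤ ∫⁻ R in Ioi R₀, F R := by
    have h1 : (∫⁻ _ in Ioi R₀, ENNReal.ofReal m) ≤ ∫⁻ R in Ioi R₀, F R :=
      setLIntegral_mono hFmeas hpt
    rwa [setLIntegral_const, Real.volume_Ioi,
      ENNReal.mul_top (by simpa using hm0)] at h1
  have htotF : (∫⁻ R, F R) = 3 • (S + S) := by
    show (∫⁻ R, ∑ i : Fin 3, (H i R + H i (-R))) = 3 • (S + S)
    rw [lintegral_finset_sum (f := fun i t => H i t + H i (-t)) _ (fun i (_ : i ∈ Finset.univ) =>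
      (((hHmeas i).add ((hHmeas i).comp measurable_neg)) :
        Measurable fun t : ℝ => H i t + H i (-t)))]
    have hterm : ∀ i : Fin 3, (∫⁻ t, (H i t + H i (-t))) = S + S := by
      intro i
      rw [lintegral_add_left (hHmeas i)]
      congr 1
      · exact hHtot i
      · have := (Measure.measurePreserving_neg (volume : Measure ℝ)).lintegral_comp (hHmeas i)
        rw [show (fun t : ℝ => H i (-t)) = fun t => H i (-t) from rfl]
        calc (∫⁻ t : ℝ, H i (-t)) = ∫⁻ t : ℝ, H i t := this
          _ = S := hHtot i
    rw [Finset.sum_congr rfl fun i _ => hterm i, Finset.sum_const, Finset.card_univ,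
      Fintype.card_fin]
  have hup : (∫⁻ R in Ioi R₀, F R) < ⊤ := by
    refine lt_of_le_of_lt (lintegral_mono' Measure.restrict_le_self le_rfl) ?_
    rw [htotF, nsmul_eq_mul]
    exact ENNReal.mul_lt_top (by simp) (ENNReal.add_lt_top.2 ⟨hS, hS⟩)
  exact absurd (lt_of_le_of_lt hlow hup) (lt_irrefl ⊤)

lemma pder_pder_eq {f : Pt → ℝ} (hf : ContDiff ℝ 2 f) (i j : Fin 3) (x : Pt) :
    pder i (pder j f) x = fderiv ℝ (fderiv ℝ f) x (Pi.single i 1) (Pi.single j 1) := by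
  have h1 : ContDiff ℝ 1 (fderiv ℝ f) := hf.fderiv_right (by norm_num)
  have h2 : HasFDerivAt (fderiv ℝ f) (fderiv ℝ (fderiv ℝ f) x) x :=
    ((h1.differentiable one_ne_zero) x).hasFDerivAt
  have h3 : HasFDerivAt (fun y => fderiv ℝ f y (Pi.single j 1 : Pt))
      ((fderiv ℝ (fderiv ℝ f) x).flip (Pi.single j 1 : Pt)) x :=
    h2.clm_apply (hasFDerivAt_const _ _) |>.congr_fderiv (by ext v; simp)
  unfold pder
  rw [h3.fderiv]
  simp

lemma pder_pder_comm {f : Pt → ℝ} (hf : ContDiff ℝ 2 f) (i j : Fin 3) (x : Pt) :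
    pder i (pder j f) x = pder j (pder i f) x := by
  rw [pder_pder_eq hf, pder_pder_eq hf]
  have hd : ∀ y, HasFDerivAt f (fderiv ℝ f y) y := fun y =>
    ((hf.differentiable (by norm_num)) y).hasFDerivAt
  have h1 : ContDiff ℝ 1 (fderiv ℝ f) := hf.fderiv_right (by norm_num)
  have h2 : HasFDerivAt (fderiv ℝ f) (fderiv ℝ (fderiv ℝ f) x) x :=
    ((h1.differentiable one_ne_zero) x).hasFDerivAt
  exact second_derivative_symmetric hd h2 _ _

lemma pder_congr {F : Type*} [NormedAddCommGroup F] [NormedSpace ℝ F]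
    {f g : Pt → F} (h : ∀ y, f y = g y) (i : Fin 3) (x : Pt) :
    pder i f x = pder i g x := by
  unfold pder; rw [funext h]

lemma pder_sum (f : Fin 3 → Pt → ℝ) (hf : ∀ j, Differentiable ℝ (f j)) (i : Fin 3) (x : Pt) :
    pder i (fun y => ∑ j, f j y) x = ∑ j, pder i (f j) x := by
  unfold pder
  rw [fderiv_fun_sum (fun j _ => (hf j x))]
  simp

lemma pder_const {F : Type*} [NormedAddCommGroup F] [NormedSpace ℝ F] (c : F) (i : Fin 3)
    (x : Pt) : pder i (fun _ => c) x = 0 := by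
  unfold pder; simp

lemma contDiff_comp2 {n : ℕ∞} {T : Pt → Fin 3 → Fin 3 → ℝ} (h : ContDiff ℝ n T)
    (c b : Fin 3) : ContDiff ℝ n (fun x => T x c b) :=
  (contDiff_pi.1 ((contDiff_pi.1 h) c)) b

lemma fderiv_comp2 {T : Pt → Fin 3 → Fin 3 → ℝ} (h : Differentiable ℝ T)
    (c b : Fin 3) (x : Pt) (v : Pt) :
    fderiv ℝ (fun y => T y c b) x v = fderiv ℝ T x v c b := by
  set P : (Fin 3 → Fin 3 → ℝ) →L[ℝ] ℝ :=
    (ContinuousLinearMap.proj b).comp (ContinuousLinearMap.proj (R := ℝ)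
      (φ := fun _ : Fin 3 => Fin 3 → ℝ) c) with hP
  have hL : HasFDerivAt (fun y => T y c b) (P.comp (fderiv ℝ T x)) x := by
    have : (fun y => T y c b) = fun y => P (T y) := rfl
    rw [this]
    exact P.hasFDerivAt.comp x (h x).hasFDerivAt
  rw [hL.fderiv]; rfl

lemma pder_comp2 {T : Pt → Fin 3 → Fin 3 → ℝ} (h : Differentiable ℝ T)
    (c b : Fin 3) (i : Fin 3) (x : Pt) :
    pder i (fun y => T y c b) x = pder i T x c b := by
  unfold pder; exact fderiv_comp2 h c b x _

lemma abs_comp2_le (M : Fin 3 → Fin 3 → ℝ) (c b : Fin 3) : |M c b| ≤ ‖M‖ := by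
  calc |M c b| = ‖M c b‖ := rfl
    _ ≤ ‖M c‖ := norm_le_pi_norm (M c) b
    _ ≤ ‖M‖ := norm_le_pi_norm M c

lemma abs_pder_comp2_le {T : Pt → Fin 3 → Fin 3 → ℝ} (h : ContDiff ℝ 2 T)
    (c b i : Fin 3) (x : Pt) :
    |pder i (fun y => T y c b) x| ≤ ‖iteratedFDeriv ℝ 1 T x‖ := by
  rw [pder_comp2 (h.differentiable (by norm_num)) c b i x]
  calc |pder i T x c b| ≤ ‖pder i T x‖ := abs_comp2_le _ c b
    _ = ‖iteratedFDeriv ℝ 1 T x (fun _ => (Pi.single i 1 : Pt))‖ := by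
        rw [iteratedFDeriv_one_apply]; rfl
    _ ≤ ‖iteratedFDeriv ℝ 1 T x‖ * ∏ _j : Fin 1, ‖(Pi.single i 1 : Pt)‖ :=
        (iteratedFDeriv ℝ 1 T x).le_opNorm _
    _ ≤ ‖iteratedFDeriv ℝ 1 T x‖ := by
        simp [Pi.norm_single]

lemma abs_comp2_le_it0 (T : Pt → Fin 3 → Fin 3 → ℝ) (c b : Fin 3) (x : Pt) :
    |T x c b| ≤ ‖iteratedFDeriv ℝ 0 T x‖ := by
  rw [norm_iteratedFDeriv_zero]
  exact abs_comp2_le _ c b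


lemma hcomm_of_closed {T : Pt → Fin 3 → Fin 3 → ℝ}
    (hclosed : ∀ x a c, (∑ e, ∑ b, epsSym e b a * pder b (fun y => T y c e) x) = 0)
    (x : Pt) (c i j : Fin 3) :
    pder i (fun y => T y c j) x = pder j (fun y => T y c i) x := by
  fin_cases i <;> fin_cases j
  all_goals (try rfl)
  · have := hclosed x 2 c; simp [epsSym, Fin.sum_univ_three] at this ⊢; linarith
  · have := hclosed x 1 c; simp [epsSym, Fin.sum_univ_three] at this ⊢; linarith
  · have := hclosed x 2 c; simp [epsSym, Fin.sum_univ_three] at this ⊢; linarith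
  · have := hclosed x 0 c; simp [epsSym, Fin.sum_univ_three] at this ⊢; linarith
  · have := hclosed x 1 c; simp [epsSym, Fin.sum_univ_three] at this ⊢; linarith
  · have := hclosed x 0 c; simp [epsSym, Fin.sum_univ_three] at this ⊢; linarith

lemma harmonic_comp2 {T : Pt → Fin 3 → Fin 3 → ℝ} (hT : ContDiff ℝ 2 T)
    (hsymm : ∀ x, sym2 (T x))
    (hdiv : ∀ x b, (∑ a, pder a (fun y => T y a b) x) = 0)
    (hcomm : ∀ x c i j, pder i (fun y => T y c j) x = pder j (fun y => T y c i) x)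
    (c b : Fin 3) (x : Pt) :
    (∑ i, pder i (pder i (fun y => T y c b)) x) = 0 := by
  have hcomp : ∀ c b : Fin 3, ContDiff ℝ 2 (fun y => T y c b) := fun c b =>
    contDiff_comp2 hT c b
  have step1 : ∀ i : Fin 3, pder i (pder i (fun y => T y c b)) x
      = pder b (pder i (fun y => T y c i)) x := by
    intro i
    have e1 : pder i (pder i (fun y => T y c b)) x = pder i (pder b (fun y => T y c i)) x :=
      pder_congr (fun y => hcomm y c i b) i x
    have e2 : pder i (pder b (fun y => T y c i)) x = pder b (pder i (fun y => T y c i)) x :=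
      pder_pder_comm (hcomp c i) i b x
    rw [e1, e2]
  rw [Finset.sum_congr rfl fun i _ => step1 i]
  have hdiffpi : ∀ i : Fin 3, Differentiable ℝ (pder i (fun y => T y c i)) := fun i =>
    (contDiff_pder (hcomp c i) i).differentiable one_ne_zero
  rw [← pder_sum (fun i => pder i (fun y => T y c i)) hdiffpi b x]
  have hzero : (fun y => ∑ i, pder i (fun z => T z c i) y) = fun _ => (0:ℝ) := by
    funext y
    have h1 : ∀ i : Fin 3, pder i (fun z => T z c i) y = pder i (fun z => T z i c) y := fun i =>
      pder_congr (fun z => hsymm z c i) i y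
    rw [Finset.sum_congr rfl fun i _ => h1 i]
    exact hdiv y c
  rw [pder_congr (fun y => congrFun hzero y) b x, pder_const]

lemma liouville_comp (u g : Pt → ℝ) (hu : ContDiff ℝ 2 u) (hgc : Continuous g)
    (hgi : Integrable g) (hg0 : ∀ x, 0 ≤ g x)
    (hdom0 : ∀ x, u x ^ 2 ≤ g x)
    (hdom : ∀ x i, |u x * pder i u x| ≤ g x)
    (hharm : ∀ x, (∑ i, pder i (pder i u) x) = 0) :
    ∀ x, u x = 0 := by
  have hz := grad_eq_zero u g hu hgc hgi hg0 hdom hharm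
  have hfz : ∀ x, fderiv ℝ u x = 0 := by
    intro x
    ext v
    rw [ContinuousLinearMap.zero_apply]
    have hv : v = ∑ i, v i • (Pi.single i 1 : Pt) := by
      have := Finset.univ_sum_single v
      rw [← this]
      congr 1; funext i
      simp [← Pi.single_smul]
    conv_lhs => rw [hv]
    rw [map_sum]
    have : ∀ i : Fin 3, fderiv ℝ u x (v i • (Pi.single i 1 : Pt)) = 0 := by
      intro i
      rw [ContinuousLinearMap.map_smul]
      have : fderiv ℝ u x (Pi.single i 1 : Pt) = 0 := hz i x
      rw [this, smul_zero]
    rw [Finset.sum_congr rfl fun i _ => this i]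
    simp
  have hconst : ∀ x, u x = u 0 := fun x =>
    is_const_of_fderiv_eq_zero (hu.differentiable (by norm_num)) hfz x 0
  have hci : Integrable (fun _ : Pt => (u 0) ^ 2) volume := by
    apply hgi.mono' aestronglyMeasurable_const
    refine Filter.Eventually.of_forall fun x => ?_
    rw [Real.norm_eq_abs, abs_of_nonneg (sq_nonneg _)]
    calc (u 0) ^ 2 = (u x) ^ 2 := by rw [hconst x]
      _ ≤ g x := hdom0 x
  rcases integrable_const_iff.1 hci with h | h
  · intro x
    rw [hconst x]
    exact pow_eq_zero_iff (n := 2) (by norm_num) |>.1 h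
  · exfalso
    have : (volume : Measure Pt) univ = ⊤ := by
      simp [volume_pi, Measure.pi_univ]
    have h := h.measure_univ_lt_top
    rw [this] at h
    exact absurd h (by simp)

end AuxLemmas

/-- **Injectivity step in Theorem A for `T̄`**: a symmetric, trace-free, divergence-free
2-tensor `T̄ ∈ H^{k-2,β-2}` on Euclidean `ℝ³` (`β ∈ (-1,0)`, `k ≥ 4`) with
`ε^{eb}{}_a ∂_b T̄_{ce} = 0` (i.e. each vector-valued 1-form `T̄_{cb} dx^b` is closed)
vanishes identically. -/
theorem closed_TT_tensor_vanishes
    (k : ℕ) (hk : 4 ≤ k) (β : ℝ) (hβ : β ∈ Set.Ioo (-1 : ℝ) 0)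
    (T : Pt → Fin 3 → Fin 3 → ℝ)
    (hmem : Hmem (k - 2) (β - 2) T)
    (hsymm : ∀ x, sym2 (T x))
    (htr : ∀ x, (∑ a, T x a a) = 0)
    (hdiv : ∀ x b, (∑ a, pder a (fun y => T y a b) x) = 0)
    (hclosed : ∀ x a c, (∑ e, ∑ b, epsSym e b a * pder b (fun y => T y c e) x) = 0) :
    T = 0 := by
  obtain ⟨hβ1, hβ2⟩ := hβ
  have hT2 : ContDiff ℝ 2 T := hmem.1.of_le (by
    have : (2 : ℕ) ≤ k - 2 := by omega
    exact_mod_cast Nat.cast_le.2 this)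
  have hi0 := hmem.2 0 (by omega)
  have hi1 := hmem.2 1 (by omega)
  set e0 : ℝ := -2 * ((β - 2) - ((0:ℕ) : ℝ)) - 3 with he0
  set e1 : ℝ := -2 * ((β - 2) - ((1:ℕ) : ℝ)) - 3 with he1
  set g : Pt → ℝ := fun x => ‖iteratedFDeriv ℝ 0 T x‖ ^ 2 * wWeight x ^ e0
      + ‖iteratedFDeriv ℝ 1 T x‖ ^ 2 * wWeight x ^ e1 with hgdef
  have hw1 : ∀ x, 1 ≤ wWeight x := by
    intro x
    show (1:ℝ) ≤ Real.sqrt (1 + ‖x‖ ^ 2)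
    have h1 : (1:ℝ) ≤ 1 + ‖x‖ ^ 2 := by nlinarith [sq_nonneg ‖x‖]
    have h2 := Real.sqrt_le_sqrt h1
    rwa [Real.sqrt_one] at h2
  have hwpos : ∀ x, 0 < wWeight x := fun x => lt_of_lt_of_le one_pos (hw1 x)
  have he0pos : 0 ≤ e0 := by rw [he0]; push_cast; linarith
  have he1pos : 0 ≤ e1 := by rw [he1]; push_cast; linarith
  have hw0 : ∀ x, 1 ≤ wWeight x ^ e0 := fun x => Real.one_le_rpow (hw1 x) he0pos
  have hw1' : ∀ x, 1 ≤ wWeight x ^ e1 := fun x => Real.one_le_rpow (hw1 x) he1pos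
  have hgi : Integrable g := hi0.add hi1
  have hwc : Continuous wWeight := by
    apply Real.continuous_sqrt.comp
    continuity
  have hgc : Continuous g := by
    apply Continuous.add <;> apply Continuous.mul
    · exact ((hT2.continuous_iteratedFDeriv (m := 0) (by norm_num)).norm).pow 2
    · exact hwc.rpow_const fun x => Or.inl (hwpos x).ne'
    · exact ((hT2.continuous_iteratedFDeriv (m := 1) (by norm_num)).norm).pow 2
    · exact hwc.rpow_const fun x => Or.inl (hwpos x).ne'
  have hg0 : ∀ x, 0 ≤ g x := by
    intro x
    apply add_nonneg <;>
      exact mul_nonneg (sq_nonneg _) (Real.rpow_nonneg (hwpos x).le _)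
  have hcomm : ∀ x c i j, pder i (fun y => T y c j) x = pder j (fun y => T y c i) x :=
    fun x c i j => hcomm_of_closed hclosed x c i j
  have main : ∀ c b x, T x c b = 0 := by
    intro c b
    set u : Pt → ℝ := fun x => T x c b with hudef
    have hu : ContDiff ℝ 2 u := contDiff_comp2 hT2 c b
    have hdom0 : ∀ x, u x ^ 2 ≤ g x := by
      intro x
      have h1 : |u x| ≤ ‖iteratedFDeriv ℝ 0 T x‖ := abs_comp2_le_it0 T c b x
      have h2 : u x ^ 2 ≤ ‖iteratedFDeriv ℝ 0 T x‖ ^ 2 := by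
        nlinarith [abs_nonneg (u x), sq_abs (u x)]
      calc u x ^ 2 ≤ ‖iteratedFDeriv ℝ 0 T x‖ ^ 2 := h2
        _ ≤ ‖iteratedFDeriv ℝ 0 T x‖ ^ 2 * wWeight x ^ e0 :=
          le_mul_of_one_le_right (sq_nonneg _) (hw0 x)
        _ ≤ g x :=
          le_add_of_nonneg_right (mul_nonneg (sq_nonneg _) (Real.rpow_nonneg (hwpos x).le _))
    have hdom : ∀ x i, |u x * pder i u x| ≤ g x := by
      intro x i
      have h1 : |u x| ≤ ‖iteratedFDeriv ℝ 0 T x‖ := abs_comp2_le_it0 T c b x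
      have h2 : |pder i u x| ≤ ‖iteratedFDeriv ℝ 1 T x‖ := abs_pder_comp2_le hT2 c b i x
      rw [abs_mul]
      have h3 : |u x| * |pder i u x| ≤
          ‖iteratedFDeriv ℝ 0 T x‖ * ‖iteratedFDeriv ℝ 1 T x‖ :=
        mul_le_mul h1 h2 (abs_nonneg _) (norm_nonneg _)
      have h4 := sq_nonneg (‖iteratedFDeriv ℝ 0 T x‖ - ‖iteratedFDeriv ℝ 1 T x‖)
      have h5 := mul_nonneg (norm_nonneg (iteratedFDeriv ℝ 0 T x))
        (norm_nonneg (iteratedFDeriv ℝ 1 T x))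
      have h6 := mul_nonneg (sq_nonneg ‖iteratedFDeriv ℝ 0 T x‖)
        (sub_nonneg.2 (hw0 x))
      have h7 := mul_nonneg (sq_nonneg ‖iteratedFDeriv ℝ 1 T x‖)
        (sub_nonneg.2 (hw1' x))
      show _ ≤ ‖iteratedFDeriv ℝ 0 T x‖ ^ 2 * wWeight x ^ e0
        + ‖iteratedFDeriv ℝ 1 T x‖ ^ 2 * wWeight x ^ e1
      nlinarith [h3, h4, h5, h6, h7]
    have hharm : ∀ x, (∑ i, pder i (pder i u) x) = 0 := fun x =>
      harmonic_comp2 hT2 hsymm hdiv hcomm c b x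
    exact liouville_comp u g hu hgc hgi hg0 hdom0 hdom hharm
  funext x c b
  show T x c b = 0
  exact main c b x
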